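/- Let ℓ ≥ 3 and B = K𝔸_n/(rad K𝔸_n)^ℓ. Then for all vertices i, j and k ≥ 0: dim_K Ext^{2k}_B(L_B(i), L_B(j)) = 1 if j = i + kℓ (and j ≤ n) and 0 otherwise, and dim_K Ext^{2k+1}_B(L_B(i), L_B(j)) = 1 if j = i + kℓ + 1 (and j ≤ n) and 0 otherwise. Moreover, the k-th term of the minimal projective resolution of L_B(i) is P_B(i+qℓ) if k = 2q and P_B(i+qℓ+1) if k = 2q+1 (as long as these vertices exist, and the resolution terminates otherwise). -/
import Mathlib


noncomputable section

universe u

/-- Data of a complete set of orthogonal idempotents indexed by the vertices `Fin n`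
of a quiver, inside a `K`-algebra. -/
structure IdemData (K : Type u) [Field K] (n : ℕ) (B : Type u) [Ring B] [Algebra K B] where
  e : Fin n → B
  orth : ∀ i j, e i * e j = if i = j then e i else 0
  complete : ∑ i, e i = 1

namespace IdemData

variable {K : Type u} [Field K] {n : ℕ} {B : Type u} [Ring B] [Algebra K B]

/-- Membership in the radical of a directed algebra: all "diagonal components" vanish.
For a directed (triangular, basic) algebra this is exactly the Jacobson radical. -/
def IsRad (d : IdemData K n B) (b : B) : Prop := ∀ i, d.e i * b * d.e i = 0

/-- A directed algebra: finite dimensional, basic, whose (Gabriel) quiver is acyclic with all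
arrows `i ⟶ j` satisfying `i < j`.  Equivalently: `e j * B * e i = 0` for `j < i` and the
"diagonal" components `e i * B * e i` are one-dimensional. -/
def Directed (d : IdemData K n B) : Prop :=
  FiniteDimensional K B ∧
  (∀ i j : Fin n, j < i → ∀ b : B, d.e j * b * d.e i = 0) ∧
  (∀ i : Fin n, ∀ b : B, ∃ c : K, d.e i * b * d.e i = c • d.e i)

/-- The opposite of a directed algebra (all arrows decrease); `A^op` for `A` directed. -/
def Codirected (d : IdemData K n B) : Prop :=
  FiniteDimensional K B ∧
  (∀ i j : Fin n, i < j → ∀ b : B, d.e j * b * d.e i = 0) ∧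
  (∀ i : Fin n, ∀ b : B, ∃ c : K, d.e i * b * d.e i = c • d.e i)

/-- The indecomposable projective left module `P(i) = B·e i`, realized as the left ideal
`{x | x * e i = x}`. -/
def proj (d : IdemData K n B) (i : Fin n) : Submodule B B where
  carrier := {x | x * d.e i = x}
  add_mem' := by
    intro a b ha hb
    simp only [Set.mem_setOf_eq] at *
    rw [add_mul, ha, hb]
  zero_mem' := by simp
  smul_mem' := by
    intro c x hx
    simp only [Set.mem_setOf_eq, smul_eq_mul] at *
    rw [mul_assoc, hx]

end IdemData

/-- The bilinear "multiplication" map `C ⊗ B → Λ`, `(c, b) ↦ ιC c * ιB b`. -/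
def dualBil {K : Type u} [Field K] {B C L : Type u} [Ring B] [Algebra K B] [Ring C] [Algebra K C]
    [Ring L] [Algebra K L] (ιB : B →ₐ[K] L) (ιC : C →ₐ[K] L) : C →ₗ[K] B →ₗ[K] L :=
  LinearMap.mk₂ K (fun c b => ιC c * ιB b)
    (fun c c' b => by simp only [map_add, add_mul])
    (fun k c b => by simp only [map_smul, smul_mul_assoc])
    (fun c b b' => by simp only [map_add, mul_add])
    (fun k c b => by simp only [map_smul, mul_smul_comm])

/-- `Λ` is the dual extension algebra `𝒜(B, C)` of `B` and `C` (in the paper `C = A^op`):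
`B` and `C` embed as subalgebras, sharing the idempotents; the product of a radical element of
`B` with a radical element of `C` (in this order; i.e. all paths `α β'`) vanishes; and the
products `ιC c * ιB b` span `Λ`, the only linear relations among them being the ones forced by
`ιC (c e_i) * ιB (e_j b) = 0` for `i ≠ j`.  This encodes `Λ ≅ ⊕_i C e_i ⊗ e_i B` as in
`Definition 2.1` of the paper. -/
structure DualExt (K : Type u) [Field K] (n : ℕ) (B C L : Type u) [Ring B] [Algebra K B]
    [Ring C] [Algebra K C] [Ring L] [Algebra K L]
    (dB : IdemData K n B) (dC : IdemData K n C) where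
  ιB : B →ₐ[K] L
  ιC : C →ₐ[K] L
  injB : Function.Injective ιB
  injC : Function.Injective ιC
  idem : ∀ i, ιB (dB.e i) = ιC (dC.e i)
  radMul : ∀ b c, dB.IsRad b → dC.IsRad c → ιB b * ιC c = 0
  spans : Submodule.span K {x : L | ∃ c b, x = ιC c * ιB b} = ⊤
  mulKer : LinearMap.ker (TensorProduct.lift (dualBil ιB ιC)) =
    Submodule.span K {x : TensorProduct K C B |
      ∃ i j : Fin n, i ≠ j ∧ ∃ c b, x = (c * dC.e i) ⊗ₜ[K] (dB.e j * b)}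

/-- The left ideal `{x | x * a = x}`; for an idempotent `a = e i` this is the
indecomposable projective module `P(i) = B e i`. -/
def leftIdeal {L : Type u} [Ring L] (a : L) : Submodule L L where
  carrier := {x | x * a = x}
  add_mem' := by
    intro x y hx hy
    simp only [Set.mem_setOf_eq] at *
    rw [add_mul, hx, hy]
  zero_mem' := by simp
  smul_mem' := by
    intro c x hx
    simp only [Set.mem_setOf_eq, smul_eq_mul] at *
    rw [mul_assoc, hx]
/-- A projective resolution `⋯ → P 1 → P 0 → M → 0` of the module `M` over `R`. -/
structure ProjRes (K : Type u) [Field K] (R : Type u) [Ring R] [Algebra K R]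
    (M : Type u) [AddCommGroup M] [Module R M] where
  P : ℕ → Type u
  [acg : ∀ k, AddCommGroup (P k)]
  [mod : ∀ k, Module R (P k)]
  d : ∀ k, P (k + 1) →ₗ[R] P k
  aug : P 0 →ₗ[R] M
  proj : ∀ k, Module.Projective R (P k)
  aug_surj : Function.Surjective aug
  exact0 : LinearMap.ker aug = LinearMap.range (d 0)
  exact : ∀ k, LinearMap.ker (d k) = LinearMap.range (d (k + 1))

attribute [instance] ProjRes.acg ProjRes.mod

/-- Minimality of a projective resolution: the differentials are radical maps,
`im (d k) ⊆ rad R · P k` (the radical being described by the idempotent data). -/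
def ProjRes.Minimal {K : Type u} [Field K] {R : Type u} [Ring R] [Algebra K R]
    {M : Type u} [AddCommGroup M] [Module R M] {n : ℕ}
    (dd : IdemData K n R) (Q : ProjRes K R M) : Prop :=
  ∀ k, LinearMap.range (Q.d k) ≤
    Submodule.span R {x : Q.P k | ∃ b m, dd.IsRad b ∧ x = b • m}

/-- `S` is (a copy of) the simple module `L(i)` at the vertex `i`: it is simple and the
idempotent `e i` acts as the identity on it. -/
def IdemData.IsSimpleAt {K : Type u} [Field K] {n : ℕ} {B : Type u} [Ring B] [Algebra K B]
    (d : IdemData K n B) (i : Fin n) (S : Type u) [AddCommGroup S] [Module B S] : Prop :=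
  IsSimpleModule B S ∧ ∀ s : S, d.e i • s = s

/-- The standard module `Δ_Λ(i) = Λe_i / Λ·(rad B)·e_i` of the dual extension algebra
(the quotient of the indecomposable projective `P_Λ(i)` by the span of the images of all
maps from `P_Λ(j)`, `j > i`, equivalently by `Λ·(rad B)·e i`). -/
def DualExt.std {K : Type u} [Field K] {n : ℕ} {B C L : Type u} [Ring B] [Algebra K B]
    [Ring C] [Algebra K C] [Ring L] [Algebra K L] {dB : IdemData K n B} {dC : IdemData K n C}
    (D : DualExt K n B C L dB dC) (i : Fin n) : Type u :=
  ↥(leftIdeal (D.ιB (dB.e i))) ⧸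
    ((Submodule.span L {x : L | ∃ b, dB.IsRad b ∧ x = D.ιB b * D.ιB (dB.e i)}).comap
      (leftIdeal (D.ιB (dB.e i))).subtype)

noncomputable instance {K : Type u} [Field K] {n : ℕ} {B C L : Type u} [Ring B] [Algebra K B]
    [Ring C] [Algebra K C] [Ring L] [Algebra K L] {dB : IdemData K n B} {dC : IdemData K n C}
    (D : DualExt K n B C L dB dC) (i : Fin n) : AddCommGroup (D.std i) :=
  by unfold DualExt.std; infer_instance

noncomputable instance {K : Type u} [Field K] {n : ℕ} {B C L : Type u} [Ring B] [Algebra K B]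
    [Ring C] [Algebra K C] [Ring L] [Algebra K L] {dB : IdemData K n B} {dC : IdemData K n C}
    (D : DualExt K n B C L dB dC) (i : Fin n) : Module L (D.std i) :=
  by unfold DualExt.std; infer_instance

section stdInstances

variable {K : Type u} [Field K] {n : ℕ} {B C L : Type u} [Ring B] [Algebra K B]
  [Ring C] [Algebra K C] [Ring L] [Algebra K L] {dB : IdemData K n B} {dC : IdemData K n C}

noncomputable instance (D : DualExt K n B C L dB dC) (i : Fin n) : Module K (D.std i) :=
  Module.compHom _ (algebraMap K L)

instance (D : DualExt K n B C L dB dC) (i : Fin n) : SMulCommClass L K (D.std i) := by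
  constructor
  intro l k x
  show l • (algebraMap K L k • x) = algebraMap K L k • (l • x)
  rw [← mul_smul, ← mul_smul, Algebra.commutes]

instance (D : DualExt K n B C L dB dC) (i : Fin n) : IsScalarTower K L (D.std i) := by
  constructor
  intro k l x
  show (k • l) • x = algebraMap K L k • l • x
  rw [← mul_smul, Algebra.smul_def]

end stdInstances

/-- The "corner" subspace `e·X·f = {x | e * x * f = x}` of an algebra, e.g. `e j * A * e ℓ`. -/
def cornerSpace (K : Type u) [Field K] {A : Type u} [Ring A] [Algebra K A] (e f : A) :
    Submodule K A where
  carrier := {x | e * x * f = x}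
  add_mem' := by
    intro x y hx hy
    simp only [Set.mem_setOf_eq] at *
    rw [mul_add, add_mul, hx, hy]
  zero_mem' := by simp
  smul_mem' := by
    intro c x hx
    simp only [Set.mem_setOf_eq] at *
    rw [mul_smul_comm, smul_mul_assoc, hx]

/-- The algebra `B` (with idempotent data `d`) is the banded Nakayama algebra
`K𝔸ₙ/(rad K𝔸ₙ)^ℓ`: it is directed, the space of paths `i → j` is one-dimensional when
`i ≤ j < i + ℓ` and zero otherwise, and nonzero paths compose to nonzero paths as long as
the total length stays `< ℓ`. -/
def IsBandAlgebra {K : Type u} [Field K] {n : ℕ} {B : Type u} [Ring B] [Algebra K B]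
    (d : IdemData K n B) (ℓ : ℕ) : Prop :=
  d.Directed ∧
  (∀ i j : Fin n, i ≤ j → (j : ℕ) < (i : ℕ) + ℓ →
    Module.finrank K ↥(cornerSpace K (d.e j) (d.e i)) = 1) ∧
  (∀ i j : Fin n, ¬(i ≤ j ∧ (j : ℕ) < (i : ℕ) + ℓ) →
    cornerSpace K (d.e j) (d.e i) = ⊥) ∧
  (∀ i j k : Fin n, i ≤ j → j ≤ k → (k : ℕ) < (i : ℕ) + ℓ →
    ∀ x y : B, x ∈ cornerSpace K (d.e k) (d.e j) → y ∈ cornerSpace K (d.e j) (d.e i) →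
      x ≠ 0 → y ≠ 0 → x * y ≠ 0)


namespace St17

open Submodule

variable {K : Type u} [Field K] {n ℓ : ℕ} {B : Type u} [Ring B] [Algebra K B]

section Deg

variable (d : IdemData K n B)

/-- `b` only has components `e j * b * e i` with `j ≥ i + m` (length-`m` paths or longer). -/
def Deg (m : ℕ) (b : B) : Prop :=
  ∀ i j : Fin n, (j : ℕ) < (i : ℕ) + m → d.e j * b * d.e i = 0

variable {d}

lemma e_idem (i : Fin n) : d.e i * d.e i = d.e i := by
  simpa using d.orth i i

lemma e_orth {i j : Fin n} (h : i ≠ j) : d.e i * d.e j = 0 := by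
  simpa [h] using d.orth i j

lemma mul_decomp (b c : B) (j i : Fin n) :
    d.e j * (b * c) * d.e i = ∑ m : Fin n, (d.e j * b * d.e m) * (d.e m * c * d.e i) := by
  have h1 : d.e j * (b * c) * d.e i = ∑ m : Fin n, d.e j * b * (d.e m * (c * d.e i)) := by
    calc d.e j * (b * c) * d.e i = d.e j * b * (1 * (c * d.e i)) := by
          simp only [mul_assoc, one_mul]
      _ = d.e j * b * ((∑ m : Fin n, d.e m) * (c * d.e i)) := by rw [d.complete]
      _ = _ := by rw [Finset.sum_mul, Finset.mul_sum]
  rw [h1]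
  refine Finset.sum_congr rfl fun m _ => ?_
  have h2 : d.e m * (c * d.e i) = d.e m * (d.e m * (c * d.e i)) := by
    conv_lhs => rw [← e_idem m]
    rw [mul_assoc]
  rw [h2]
  simp only [mul_assoc]

lemma deg_mul {a c : ℕ} {b b' : B} (hb : Deg d a b) (hb' : Deg d c b') :
    Deg d (a + c) (b * b') := by
  intro i j hj
  rw [mul_decomp]
  refine Finset.sum_eq_zero fun m _ => ?_
  by_cases hm : (j : ℕ) < (m : ℕ) + a
  · rw [hb m j hm, zero_mul]
  · have : (m : ℕ) < (i : ℕ) + c := by omega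
    rw [hb' i m this, mul_zero]

lemma deg_zero (hdir : d.Directed) (b : B) : Deg d 0 b := by
  intro i j hj
  exact hdir.2.1 i j (by exact_mod_cast hj) b

lemma deg_one_of_isRad (hdir : d.Directed) {b : B} (hb : d.IsRad b) : Deg d 1 b := by
  intro i j hj
  rcases lt_or_eq_of_le (Nat.lt_succ_iff.mp hj) with h | h
  · exact hdir.2.1 i j (by exact_mod_cast h) b
  · have : j = i := Fin.ext h
    subst this
    exact hb j

lemma deg_mul_left (hdir : d.Directed) {a : ℕ} {b : B} (hb : Deg d a b) (c : B) :
    Deg d a (c * b) := by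
  simpa using deg_mul (deg_zero hdir c) hb

lemma deg_mul_right (hdir : d.Directed) {a : ℕ} {b : B} (hb : Deg d a b) (c : B) :
    Deg d a (b * c) := by
  simpa using deg_mul hb (deg_zero hdir c)

end Deg

section Pw

variable (d : IdemData K n B)
variable {Q : Type u} [AddCommGroup Q] [Module B Q]

/-- The submodule `(rad B)^m · N`. -/
def pw (N : Submodule B Q) (m : ℕ) : Submodule B Q :=
  Submodule.span B {x | ∃ b y, Deg d m b ∧ y ∈ N ∧ x = b • y}

variable {d}

lemma smul_mem_pw (hdir : d.Directed) {N : Submodule B Q} {a m : ℕ} {b : B} (hb : Deg d a b)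
    {x : Q} (hx : x ∈ pw d N m) : b • x ∈ pw d N (a + m) := by
  induction hx using Submodule.span_induction generalizing b with
  | mem x hxx =>
      obtain ⟨b', y, hb', hy, rfl⟩ := hxx
      rw [← mul_smul]
      exact Submodule.subset_span ⟨b * b', y, deg_mul hb hb', hy, rfl⟩
  | zero => simpa using Submodule.zero_mem _
  | add x y _ _ ihx ihy =>
      rw [smul_add]
      exact Submodule.add_mem _ (ihx hb) (ihy hb)
  | smul c x _ ih =>
      rw [← mul_smul]
      exact ih (deg_mul_right hdir hb c)

lemma pw_le_self {N : Submodule B Q} (m : ℕ) : pw d N m ≤ N := by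
  rw [pw, Submodule.span_le]
  rintro x ⟨b, y, _, hy, rfl⟩
  exact N.smul_mem b hy

lemma le_pw_one_of_isRadSpan (hdir : d.Directed) {N : Submodule B Q}
    (h : N ≤ Submodule.span B {x : Q | ∃ b m, d.IsRad b ∧ x = b • m}) :
    N ≤ pw d (⊤ : Submodule B Q) 1 := by
  refine h.trans ?_
  rw [Submodule.span_le]
  rintro x ⟨b, m, hb, rfl⟩
  exact Submodule.subset_span ⟨b, m, deg_one_of_isRad hdir hb, trivial, rfl⟩

end Pw

end St17

namespace St17

open Submodule

variable {K : Type u} [Field K] {n ℓ : ℕ} {B : Type u} [Ring B] [Algebra K B]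
variable {d : IdemData K n B}

section Band

lemma mem_corner {x : B} {e f : B} : x ∈ cornerSpace K e f ↔ e * x * f = x := Iff.rfl

lemma deg_top (hb : IsBandAlgebra d ℓ) {b : B} (h : Deg d ℓ b) : b = 0 := by
  have h1 : b = ∑ j : Fin n, ∑ i : Fin n, d.e j * b * d.e i := by
    calc b = (∑ j : Fin n, d.e j) * b * (∑ i : Fin n, d.e i) := by
          rw [d.complete, one_mul, mul_one]
      _ = _ := by rw [Finset.sum_mul, Finset.sum_mul]
          <;> exact Finset.sum_congr rfl fun j _ => by rw [Finset.mul_sum]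
  rw [h1]
  refine Finset.sum_eq_zero fun j _ => Finset.sum_eq_zero fun i _ => ?_
  by_cases hij : (j : ℕ) < (i : ℕ) + ℓ
  · exact h i j hij
  · have hbot := hb.2.2.1 i j (by omega)
    have : d.e j * b * d.e i ∈ cornerSpace K (d.e j) (d.e i) := by
      rw [mem_corner]
      calc d.e j * (d.e j * b * d.e i) * d.e i
          = (d.e j * d.e j) * b * (d.e i * d.e i) := by simp only [mul_assoc]
        _ = d.e j * b * d.e i := by rw [e_idem, e_idem]
    rw [hbot] at this
    exact this

variable {Q : Type u} [AddCommGroup Q] [Module B Q]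

lemma pw_top (hb : IsBandAlgebra d ℓ) (N : Submodule B Q) : pw d N ℓ = ⊥ := by
  rw [eq_bot_iff, pw, Submodule.span_le]
  rintro x ⟨b, y, hbdeg, hy, rfl⟩
  rw [deg_top hb hbdeg, zero_smul]
  exact Submodule.zero_mem _

lemma nak1 (hb : IsBandAlgebra d ℓ) (hl : 3 ≤ ℓ) {S : Submodule B Q}
    (h : (⊤ : Submodule B Q) ≤ S ⊔ pw d ⊤ 1) : S = ⊤ := by
  have key : ∀ m : ℕ, (⊤ : Submodule B Q) ≤ S ⊔ pw d ⊤ (m + 1) := by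
    intro m
    induction m with
    | zero => exact h
    | succ m ih =>
        refine ih.trans (sup_le le_sup_left ?_)
        rw [pw, Submodule.span_le]
        rintro x ⟨b, y, hbdeg, -, rfl⟩
        have hy' : y ∈ S ⊔ pw d ⊤ 1 := h trivial
        obtain ⟨s, hs, r, hr, rfl⟩ := Submodule.mem_sup.mp hy'
        rw [smul_add]
        refine Submodule.add_mem _ (Submodule.mem_sup_left (S.smul_mem b hs)) ?_
        exact Submodule.mem_sup_right (smul_mem_pw hb.1 hbdeg hr)
  have := key (ℓ - 1)
  rw [show ℓ - 1 + 1 = ℓ by omega, pw_top hb, sup_bot_eq] at this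
  exact le_antisymm le_top this

lemma nak2 (hb : IsBandAlgebra d ℓ) (hl : 3 ≤ ℓ) {N : Submodule B Q}
    (h : N ≤ pw d N 1) : N = ⊥ := by
  have key : ∀ m : ℕ, N ≤ pw d N (m + 1) := by
    intro m
    induction m with
    | zero => exact h
    | succ m ih =>
        refine ih.trans ?_
        rw [pw, Submodule.span_le]
        rintro x ⟨b, y, hbdeg, hy, rfl⟩
        exact smul_mem_pw hb.1 hbdeg (h hy)
  have := key (ℓ - 1)
  rwa [show ℓ - 1 + 1 = ℓ by omega, pw_top hb, le_bot_iff] at this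

section PaDef
open scoped Classical

/-- the chosen basis path element of `e j * B * e i`. -/
noncomputable def pa (d : IdemData K n B) (j i : Fin n) : B :=
  if h : ∃ x ∈ cornerSpace K (d.e j) (d.e i), x ≠ 0 then h.choose else 0

lemma pa_mem (d : IdemData K n B) (j i : Fin n) :
    pa d j i ∈ cornerSpace K (d.e j) (d.e i) := by
  rw [pa]
  split
  · next h => exact h.choose_spec.1
  · exact Submodule.zero_mem _

lemma pa_ne (hb : IsBandAlgebra d ℓ) {j i : Fin n} (h1 : i ≤ j) (h2 : (j : ℕ) < (i : ℕ) + ℓ) :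
    pa d j i ≠ 0 := by
  haveI : FiniteDimensional K B := hb.1.1
  have hfr := hb.2.1 i j h1 h2
  haveI : Nontrivial ↥(cornerSpace K (d.e j) (d.e i)) :=
    Module.nontrivial_of_finrank_pos (R := K) (by rw [hfr]; norm_num)
  obtain ⟨y, hy⟩ := exists_ne (0 : ↥(cornerSpace K (d.e j) (d.e i)))
  have hex : ∃ x ∈ cornerSpace K (d.e j) (d.e i), x ≠ 0 :=
    ⟨y, y.2, fun h0 => hy (Subtype.ext h0)⟩
  rw [pa, dif_pos hex]
  exact hex.choose_spec.2

end PaDef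

lemma exists_smul_pa (hb : IsBandAlgebra d ℓ) {j i : Fin n} {x : B}
    (hx : x ∈ cornerSpace K (d.e j) (d.e i)) : ∃ c : K, x = c • pa d j i := by
  by_cases hv : i ≤ j ∧ (j : ℕ) < (i : ℕ) + ℓ
  · haveI : FiniteDimensional K B := hb.1.1
    have hfr := hb.2.1 i j hv.1 hv.2
    set V := cornerSpace K (d.e j) (d.e i)
    have hpane : (⟨pa d j i, pa_mem d j i⟩ : ↥V) ≠ 0 := by
      simp only [ne_eq, Submodule.mk_eq_zero]
      exact pa_ne hb hv.1 hv.2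
    have hspan : Submodule.span K {(⟨pa d j i, pa_mem d j i⟩ : ↥V)} = ⊤ := by
      apply Submodule.eq_top_of_finrank_eq
      rw [finrank_span_singleton hpane, hfr]
    have : (⟨x, hx⟩ : ↥V) ∈ Submodule.span K {(⟨pa d j i, pa_mem d j i⟩ : ↥V)} := by
      rw [hspan]; trivial
    obtain ⟨c, hc⟩ := Submodule.mem_span_singleton.mp this
    exact ⟨c, by simpa [Subtype.ext_iff] using hc.symm⟩
  · have := hb.2.2.1 i j hv
    rw [this] at hx
    exact ⟨0, by simp [(Submodule.mem_bot _).mp hx]⟩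

lemma corner_comp (x : B) (j i : Fin n) :
    d.e j * x * d.e i ∈ cornerSpace K (d.e j) (d.e i) := by
  rw [mem_corner]
  calc d.e j * (d.e j * x * d.e i) * d.e i = (d.e j * d.e j) * x * (d.e i * d.e i) := by
        simp only [mul_assoc]
    _ = d.e j * x * d.e i := by rw [e_idem, e_idem]

lemma e_mul_pa_of_ne {m j i : Fin n} (h : m ≠ j) : d.e m * pa d j i = 0 := by
  have hm := pa_mem d j i
  rw [mem_corner] at hm
  calc d.e m * pa d j i = d.e m * (d.e j * pa d j i * d.e i) := by rw [hm]
    _ = (d.e m * d.e j) * (pa d j i * d.e i) := by simp only [mul_assoc]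
    _ = 0 := by rw [e_orth h, zero_mul]

lemma e_mul_pa_self (j i : Fin n) : d.e j * pa d j i = pa d j i := by
  have hm := pa_mem d j i
  rw [mem_corner] at hm
  calc d.e j * pa d j i = d.e j * (d.e j * pa d j i * d.e i) := by rw [hm]
    _ = (d.e j * d.e j) * pa d j i * d.e i := by simp only [mul_assoc]
    _ = pa d j i := by rw [e_idem, hm]

lemma pa_mul_e_of_ne {j i m : Fin n} (h : i ≠ m) : pa d j i * d.e m = 0 := by
  have hm := pa_mem d j i
  rw [mem_corner] at hm
  conv_lhs => rw [← hm]
  rw [mul_assoc, e_orth h, mul_zero]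

lemma pa_mul_e_self (j i : Fin n) : pa d j i * d.e i = pa d j i := by
  have hm := pa_mem d j i
  rw [mem_corner] at hm
  conv_lhs => rw [← hm]
  rw [mul_assoc, e_idem, hm]

lemma pa_eq_zero (hb : IsBandAlgebra d ℓ) {j i : Fin n}
    (h : ¬(i ≤ j ∧ (j : ℕ) < (i : ℕ) + ℓ)) : pa d j i = 0 := by
  have := pa_mem d j i
  rw [hb.2.2.1 i j h] at this
  exact (Submodule.mem_bot _).mp this

lemma pa_mul_pa_corner (k j i : Fin n) :
    pa d k j * pa d j i ∈ cornerSpace K (d.e k) (d.e i) := by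
  rw [mem_corner]
  calc d.e k * (pa d k j * pa d j i) * d.e i
      = (d.e k * pa d k j) * (pa d j i * d.e i) := by simp only [mul_assoc]
    _ = pa d k j * pa d j i := by rw [e_mul_pa_self, pa_mul_e_self]

lemma pa_mul_pa_ne (hb : IsBandAlgebra d ℓ) {k j i : Fin n} (hij : i ≤ j) (hjk : j ≤ k)
    (h : (k : ℕ) < (i : ℕ) + ℓ) : pa d k j * pa d j i ≠ 0 := by
  refine hb.2.2.2 i j k hij hjk h _ _ (pa_mem d k j) (pa_mem d j i) ?_ ?_
  · exact pa_ne hb hjk (by have := Fin.le_iff_val_le_val.mp hij; omega)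
  · exact pa_ne hb hij (by have := Fin.le_iff_val_le_val.mp hjk; omega)

lemma pa_mul_pa_eq (hb : IsBandAlgebra d ℓ) {k j i : Fin n} (hij : i ≤ j) (hjk : j ≤ k)
    (h : (k : ℕ) < (i : ℕ) + ℓ) :
    ∃ c : K, c ≠ 0 ∧ pa d k j * pa d j i = c • pa d k i := by
  obtain ⟨c, hc⟩ := exists_smul_pa hb (pa_mul_pa_corner (d := d) k j i)
  refine ⟨c, fun h0 => ?_, hc⟩
  rw [h0, zero_smul] at hc
  exact pa_mul_pa_ne hb hij hjk h hc

lemma pa_mul_pa_zero (hb : IsBandAlgebra d ℓ) {k j i : Fin n} (h : (i : ℕ) + ℓ ≤ (k : ℕ)) :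
    pa d k j * pa d j i = 0 := by
  have hm := pa_mul_pa_corner (d := d) k j i
  rw [hb.2.2.1 i k (by omega)] at hm
  exact (Submodule.mem_bot _).mp hm

lemma sum_e_mul (x : B) : ∑ j : Fin n, d.e j * x = x := by
  rw [← Finset.sum_mul, d.complete, one_mul]

end Band

end St17

namespace St17

open Submodule

variable {K : Type u} [Field K] {n ℓ : ℕ} {B : Type u} [Ring B] [Algebra K B]
variable {d : IdemData K n B}

section Mod

lemma mem_leftIdeal {a x : B} : x ∈ leftIdeal a ↔ x * a = x := Iff.rfl

lemma proj_leftIdeal (w : Fin n) : Module.Projective B ↥(leftIdeal (d.e w)) := by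
  refine Module.Projective.of_split (M := B) (leftIdeal (d.e w)).subtype
    ⟨⟨fun x => ⟨x * d.e w, by rw [mem_leftIdeal, mul_assoc, e_idem]⟩, fun x y => by
      simp [add_mul]⟩, fun b x => by simp [smul_eq_mul, mul_assoc]⟩ ?_
  apply LinearMap.ext
  intro x
  apply Subtype.ext
  show (x : B) * d.e w = (x : B)
  exact mem_leftIdeal.mp x.2

lemma e_mul_mem {x : B} {w : Fin n} (hx : x ∈ leftIdeal (d.e w)) (j : Fin n) :
    d.e j * x ∈ leftIdeal (d.e w) := by
  rw [mem_leftIdeal, mul_assoc, mem_leftIdeal.mp hx]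

lemma comp_corner {x : B} {w : Fin n} (hx : x ∈ leftIdeal (d.e w)) (j : Fin n) :
    d.e j * x ∈ cornerSpace K (d.e j) (d.e w) := by
  have : d.e j * x = d.e j * x * d.e w := by rw [mul_assoc, mem_leftIdeal.mp hx]
  rw [this]
  exact corner_comp x j w

lemma comp_smul (hb : IsBandAlgebra d ℓ) {x : B} {w : Fin n} (hx : x ∈ leftIdeal (d.e w))
    (j : Fin n) : ∃ c : K, d.e j * x = c • pa d j w :=
  exists_smul_pa hb (comp_corner hx j)

lemma comp_zero (hb : IsBandAlgebra d ℓ) {x : B} {w : Fin n} (hx : x ∈ leftIdeal (d.e w))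
    {j : Fin n} (h : ¬((w : ℕ) ≤ (j : ℕ) ∧ (j : ℕ) < (w : ℕ) + ℓ)) : d.e j * x = 0 := by
  have hc := comp_corner hx j
  rw [hb.2.2.1 w j (by rw [Fin.le_def]; omega)] at hc
  exact (Submodule.mem_bot _).mp hc

lemma mul_decomp' (b y : B) (j : Fin n) :
    d.e j * (b * y) = ∑ m : Fin n, (d.e j * b * d.e m) * (d.e m * y) := by
  have h1 : d.e j * (b * y) = ∑ m : Fin n, d.e j * b * (d.e m * y) := by
    calc d.e j * (b * y) = d.e j * b * (1 * y) := by simp only [mul_assoc, one_mul]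
      _ = d.e j * b * ((∑ m : Fin n, d.e m) * y) := by rw [d.complete]
      _ = _ := by rw [Finset.sum_mul, Finset.mul_sum]
  rw [h1]
  refine Finset.sum_congr rfl fun m _ => ?_
  have h2 : d.e m * y = d.e m * (d.e m * y) := by
    conv_lhs => rw [← e_idem m]
    rw [mul_assoc]
  conv_lhs => rw [h2]
  simp only [mul_assoc]

/-- The submodule `J^t P(w)` of `P(w) = B e_w`. -/
def Jsub (d : IdemData K n B) (w : Fin n) (t : ℕ) : Submodule B ↥(leftIdeal (d.e w)) :=
  Submodule.span B {y | ∃ j : Fin n, (w : ℕ) + t ≤ (j : ℕ) ∧ (y : B) = pa d j w}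

lemma pa_mem_leftIdeal (j w : Fin n) : pa d j w ∈ leftIdeal (d.e w) := pa_mul_e_self j w

lemma e_mem_leftIdeal (w : Fin n) : d.e w ∈ leftIdeal (d.e w) := e_idem w

lemma mem_Jsub_iff (hb : IsBandAlgebra d ℓ) {w : Fin n} {t : ℕ} (x : ↥(leftIdeal (d.e w))) :
    x ∈ Jsub d w t ↔ ∀ j : Fin n, (j : ℕ) < (w : ℕ) + t → d.e j * (x : B) = 0 := by
  constructor
  · intro hx
    induction hx using Submodule.span_induction with
    | mem y hy =>
        obtain ⟨m, hm, hym⟩ := hy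
        intro j hj
        rw [hym, e_mul_pa_of_ne (fun hjm => by rw [hjm] at hj; omega)]
    | zero => intro j hj; simp
    | add y z _ _ ihy ihz =>
        intro j hj
        rw [Submodule.coe_add, mul_add, ihy j hj, ihz j hj, add_zero]
    | smul b y _ ih =>
        intro j hj
        rw [SetLike.val_smul, smul_eq_mul, mul_decomp']
        refine Finset.sum_eq_zero fun m _ => ?_
        by_cases hm : (m : ℕ) < (w : ℕ) + t
        · rw [ih m hm, mul_zero]
        · rw [hb.1.2.1 m j (by rw [Fin.lt_def]; omega) b, zero_mul]
  · intro h
    have hx : x = ∑ m : Fin n, (⟨d.e m * (x : B), e_mul_mem x.2 m⟩ : ↥(leftIdeal (d.e w))) := by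
      apply Subtype.ext
      rw [AddSubmonoidClass.coe_finset_sum]
      exact (sum_e_mul (x : B)).symm
    rw [hx]
    refine Submodule.sum_mem _ fun m _ => ?_
    by_cases hm : (m : ℕ) < (w : ℕ) + t
    · have : (⟨d.e m * (x : B), e_mul_mem x.2 m⟩ : ↥(leftIdeal (d.e w))) = 0 :=
        Subtype.ext (h m hm)
      rw [this]; exact Submodule.zero_mem _
    · obtain ⟨c, hc⟩ := comp_smul hb x.2 m
      have : (⟨d.e m * (x : B), e_mul_mem x.2 m⟩ : ↥(leftIdeal (d.e w))) =
          algebraMap K B c • ⟨pa d m w, pa_mem_leftIdeal m w⟩ := by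
        apply Subtype.ext
        show d.e m * (x : B) = algebraMap K B c * pa d m w
        rw [hc, Algebra.smul_def]
      rw [this]
      exact Submodule.smul_mem _ _ (Submodule.subset_span ⟨m, by omega, rfl⟩)

lemma Jsub_eq_bot {w : Fin n} {t : ℕ} (h : n ≤ (w : ℕ) + t) : Jsub d w t = ⊥ := by
  rw [Jsub, eq_bot_iff, Submodule.span_le]
  rintro y ⟨j, hj, -⟩
  exact absurd j.isLt (by omega)

lemma deg_one_pa {j w : Fin n} (h : (w : ℕ) < (j : ℕ)) : Deg d 1 (pa d j w) := by
  intro a c hac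
  by_cases hcj : c = j
  · subst hcj
    rw [e_mul_pa_self]
    by_cases haw : w = a
    · subst haw
      omega
    · exact pa_mul_e_of_ne haw
  · rw [e_mul_pa_of_ne hcj, zero_mul]

lemma Jsub_le_pw (hb : IsBandAlgebra d ℓ) {w : Fin n} {t : ℕ} (ht : 1 ≤ t) :
    Jsub d w t ≤ pw d (⊤ : Submodule B ↥(leftIdeal (d.e w))) 1 := by
  rw [Jsub, Submodule.span_le]
  rintro y ⟨j, hj, hy⟩
  refine Submodule.subset_span ⟨pa d j w, ⟨d.e w, e_mem_leftIdeal w⟩,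
    deg_one_pa (by omega), trivial, ?_⟩
  apply Subtype.ext
  rw [hy]
  show pa d j w = pa d j w * d.e w
  rw [pa_mul_e_self]

/-- right multiplication by `pa u w` as a map `P(u) → P(w)`. -/
noncomputable def rmul (d : IdemData K n B) (u w : Fin n) :
    ↥(leftIdeal (d.e u)) →ₗ[B] ↥(leftIdeal (d.e w)) where
  toFun x := ⟨(x : B) * pa d u w, by rw [mem_leftIdeal, mul_assoc, pa_mul_e_self]⟩
  map_add' x y := by apply Subtype.ext; simp [add_mul]
  map_smul' b x := by apply Subtype.ext; simp [smul_eq_mul, mul_assoc]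

lemma rmul_zero_iff (hb : IsBandAlgebra d ℓ) {u w : Fin n} (hwu : (w : ℕ) ≤ (u : ℕ))
    (hu : (u : ℕ) < (w : ℕ) + ℓ) (x : ↥(leftIdeal (d.e u))) :
    rmul d u w x = 0 ↔ ∀ j : Fin n, (j : ℕ) < (w : ℕ) + ℓ → d.e j * (x : B) = 0 := by
  rw [Subtype.ext_iff]
  show (x : B) * pa d u w = 0 ↔ _
  constructor
  · intro h0 j hj
    by_cases hju : (u : ℕ) ≤ (j : ℕ)
    · obtain ⟨c, hc⟩ := comp_smul hb x.2 j
      have h1 : d.e j * ((x : B) * pa d u w) = 0 := by rw [h0, mul_zero]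
      rw [← mul_assoc, hc, smul_mul_assoc] at h1
      obtain ⟨c', hc', hcc⟩ := pa_mul_pa_eq hb (j := u) (k := j) (i := w)
        (by rw [Fin.le_def]; omega) (by rw [Fin.le_def]; omega) hj
      rw [hcc, smul_smul] at h1
      rcases smul_eq_zero.mp h1 with h2 | h2
      · rcases mul_eq_zero.mp h2 with h3 | h3
        · rw [hc, h3, zero_smul]
        · exact absurd h3 hc'
      · exact absurd h2 (pa_ne hb (by rw [Fin.le_def]; omega) hj)
    · exact comp_zero hb x.2 (by omega)
  · intro h
    have hx : (x : B) = ∑ j : Fin n, d.e j * (x : B) := (sum_e_mul _).symm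
    rw [hx, Finset.sum_mul]
    refine Finset.sum_eq_zero fun j _ => ?_
    by_cases hj : (j : ℕ) < (w : ℕ) + ℓ
    · rw [h j hj, zero_mul]
    · obtain ⟨c, hc⟩ := comp_smul hb x.2 j
      rw [hc, smul_mul_assoc, pa_mul_pa_zero hb (by omega), smul_zero]

lemma rmul_range (hb : IsBandAlgebra d ℓ) {u w : Fin n} (hwu : (w : ℕ) ≤ (u : ℕ))
    (hu : (u : ℕ) < (w : ℕ) + ℓ) :
    LinearMap.range (rmul d u w) = Jsub d w ((u : ℕ) - (w : ℕ)) := by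
  apply le_antisymm
  · rintro y ⟨x, rfl⟩
    rw [mem_Jsub_iff hb]
    intro j hj
    show d.e j * ((x : B) * pa d u w) = 0
    rw [← mul_assoc]
    have : d.e j * (x : B) = 0 := comp_zero hb x.2 (by omega)
    rw [this, zero_mul]
  · rw [Jsub, Submodule.span_le]
    rintro y ⟨j, hj, hy⟩
    by_cases hjv : (j : ℕ) < (w : ℕ) + ℓ
    · obtain ⟨c, hc, hcc⟩ := pa_mul_pa_eq hb (i := w) (j := u) (k := j)
        (by rw [Fin.le_def]; omega) (by rw [Fin.le_def]; omega) hjv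
      refine ⟨algebraMap K B c⁻¹ • ⟨pa d j u, pa_mem_leftIdeal j u⟩, ?_⟩
      apply Subtype.ext
      show (algebraMap K B c⁻¹ * pa d j u) * pa d u w = (y : B)
      rw [mul_assoc, hcc, hy, ← Algebra.smul_def, smul_smul, inv_mul_cancel₀ hc, one_smul]
    · have : (y : B) = 0 := by rw [hy, pa_eq_zero hb (by omega)]
      exact ⟨0, by simp [Subtype.ext_iff, this]⟩

end Mod

end St17

namespace St17

open Submodule LinearMap

variable {K : Type u} [Field K] {n ℓ : ℕ} {B : Type u} [Ring B] [Algebra K B]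
variable {d : IdemData K n B}

section Cover

variable {Q N : Type u} [AddCommGroup Q] [Module B Q] [AddCommGroup N] [Module B N]

lemma subsingleton_of_top_le_pw (hb : IsBandAlgebra d ℓ) (hl : 3 ≤ ℓ)
    (h : (⊤ : Submodule B Q) ≤ pw d ⊤ 1) : Subsingleton Q := by
  have htop : (⊤ : Submodule B Q) = ⊥ := nak2 hb hl h
  have hz : ∀ x : Q, x = 0 := fun x => (Submodule.mem_bot _).mp (htop ▸ Submodule.mem_top)
  exact ⟨fun a b => by rw [hz a, hz b]⟩

lemma cover (hb : IsBandAlgebra d ℓ) (hl : 3 ≤ ℓ) (hQ : Module.Projective B Q) (w : Fin n)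
    {s : ℕ} (hs : 1 ≤ s) (π : Q →ₗ[B] N) (hπs : Function.Surjective π)
    (hπk : LinearMap.ker π ≤ pw d ⊤ 1) (ρ : ↥(leftIdeal (d.e w)) →ₗ[B] N)
    (hρs : Function.Surjective ρ) (hρk : LinearMap.ker ρ = Jsub d w s) :
    ∃ g : Q ≃ₗ[B] ↥(leftIdeal (d.e w)),
      Submodule.map (g : Q →ₗ[B] ↥(leftIdeal (d.e w))) (LinearMap.ker π) = Jsub d w s := by
  haveI := hQ
  obtain ⟨g, hg⟩ := Module.projective_lifting_property ρ π hρs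
  have hgπ : ∀ x, ρ (g x) = π x := fun x => by rw [← hg]; rfl
  -- `g` is surjective
  have hgsurj : LinearMap.range g = ⊤ := by
    apply nak1 hb hl
    intro x _
    obtain ⟨q, hq⟩ := hπs (ρ x)
    have hker : x - g q ∈ LinearMap.ker ρ := by
      rw [LinearMap.mem_ker, map_sub, hgπ, hq, sub_self]
    rw [hρk] at hker
    have : x = g q + (x - g q) := by abel
    rw [this]
    exact Submodule.add_mem _ (Submodule.mem_sup_left ⟨q, rfl⟩)
      (Submodule.mem_sup_right (Jsub_le_pw hb hs hker))
  have hgs : Function.Surjective g := LinearMap.range_eq_top.mp hgsurj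
  -- splitting
  haveI := proj_leftIdeal (d := d) w
  obtain ⟨h, hh⟩ := Module.projective_lifting_property g LinearMap.id hgs
  have hgh : ∀ p, g (h p) = p := fun p => by
    have := LinearMap.ext_iff.mp hh p
    simpa using this
  -- `g` is injective
  have hkerπ : LinearMap.ker g ≤ LinearMap.ker π := by
    intro x hx
    rw [LinearMap.mem_ker] at hx ⊢
    rw [← hgπ, hx, map_zero]
  have hginj : LinearMap.ker g = ⊥ := by
    apply nak2 hb hl
    intro x hx
    have hx1 : x ∈ pw d (⊤ : Submodule B Q) 1 := hπk (hkerπ hx)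
    have hsplit : pw d (⊤ : Submodule B Q) 1 ≤
        pw d (LinearMap.ker g) 1 ⊔ LinearMap.range h := by
      rw [pw, Submodule.span_le]
      rintro z ⟨b, y, hbdeg, -, rfl⟩
      have hyk : y - h (g y) ∈ LinearMap.ker g := by
        rw [LinearMap.mem_ker, map_sub, hgh, sub_self]
      have hdec : b • y = b • (y - h (g y)) + b • h (g y) := by rw [← smul_add, sub_add_cancel]
      rw [hdec]
      refine Submodule.add_mem _ ?_ ?_
      · exact Submodule.mem_sup_left (Submodule.subset_span ⟨b, _, hbdeg, hyk, rfl⟩)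
      · exact Submodule.mem_sup_right ⟨b • g y, by rw [map_smul]⟩
    obtain ⟨r, hr, z, hz, hxz⟩ := Submodule.mem_sup.mp (hsplit hx1)
    have hrk : r ∈ LinearMap.ker g := pw_le_self 1 hr
    have hzk : z ∈ LinearMap.ker g := by
      have : z = x - r := by rw [← hxz]; abel
      rw [this]
      exact Submodule.sub_mem _ hx hrk
    obtain ⟨p, rfl⟩ := hz
    have hp0 : p = 0 := by
      have := LinearMap.mem_ker.mp hzk
      rwa [hgh] at this
    rw [hp0, map_zero, add_zero] at hxz
    rwa [hxz] at hr
  refine ⟨LinearEquiv.ofBijective g ⟨LinearMap.ker_eq_bot.mp hginj, hgs⟩, ?_⟩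
  rw [← hρk]
  apply le_antisymm
  · rintro y ⟨x, hx, rfl⟩
    rw [LinearMap.mem_ker]
    show ρ (g x) = 0
    rw [hgπ, LinearMap.mem_ker.mp hx]
  · intro y hy
    obtain ⟨x, rfl⟩ := hgs y
    exact ⟨x, by show π x = 0; rw [← hgπ]; exact LinearMap.mem_ker.mp hy, rfl⟩

end Cover

section Simple

variable {Sj : Type u} [AddCommGroup Sj] [Module B Sj] {j : Fin n}

lemma e_smul_ne (hSj : d.IsSimpleAt j Sj) {m : Fin n} (hm : m ≠ j) (s : Sj) :
    d.e m • s = 0 := by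
  conv_lhs => rw [← hSj.2 s]
  rw [← mul_smul, e_orth hm, zero_smul]

lemma smul_elem (hSj : d.IsSimpleAt j Sj) (b : B) (s : Sj) :
    b • s = (d.e j * b * d.e j) • s := by
  conv_lhs => rw [← hSj.2 s, ← mul_smul]
  have h1 : b * d.e j = ∑ m : Fin n, d.e m * (b * d.e j) := (sum_e_mul _).symm
  rw [h1, Finset.sum_smul]
  rw [Finset.sum_eq_single j]
  · rw [← mul_assoc]
  · intro m _ hm
    rw [mul_smul]
    have : (b * d.e j) • s = d.e j • ((b * d.e j) • s) := by
      conv_lhs => rw [← hSj.2 ((b * d.e j) • s)]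
    rw [this, ← mul_smul, e_orth hm, zero_smul]
  · intro hj
    exact absurd (Finset.mem_univ j) hj

lemma rad_smul_simple (hSj : d.IsSimpleAt j Sj) {b : B} (hrad : d.IsRad b) (s : Sj) :
    b • s = 0 := by
  rw [smul_elem hSj, hrad j, zero_smul]

lemma simple_finrank_one [Module K Sj] [IsScalarTower K B Sj] (hdir : d.Directed)
    (hSj : d.IsSimpleAt j Sj) : Module.finrank K Sj = 1 := by
  haveI : IsSimpleModule B Sj := hSj.1
  haveI : Nontrivial Sj := IsSimpleModule.nontrivial B Sj
  obtain ⟨s₀, hs₀⟩ := exists_ne (0 : Sj)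
  refine finrank_eq_one s₀ hs₀ fun w => ?_
  have hspan : Submodule.span B {s₀} = ⊤ := by
    rcases eq_bot_or_eq_top (Submodule.span B {s₀}) with h | h
    · exact absurd ((Submodule.mem_bot _).mp (h ▸ Submodule.mem_span_singleton_self s₀)) hs₀
    · exact h
  obtain ⟨b, hb⟩ := Submodule.mem_span_singleton.mp (hspan ▸ Submodule.mem_top (x := w))
  obtain ⟨c, hc⟩ := hdir.2.2 j b
  refine ⟨c, ?_⟩
  rw [← hb, smul_elem hSj, hc, smul_assoc, hSj.2]

variable [Module K Sj] [IsScalarTower K B Sj] [SMulCommClass B K Sj]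

lemma hom_zero_of_ne (hSj : d.IsSimpleAt j Sj) {v : Fin n} (hv : v ≠ j)
    (φ : ↥(leftIdeal (d.e v)) →ₗ[B] Sj) : φ = 0 := by
  have h0 : φ ⟨d.e v, e_mem_leftIdeal v⟩ = 0 := by
    have h1 : (⟨d.e v, e_mem_leftIdeal v⟩ : ↥(leftIdeal (d.e v))) =
        d.e v • ⟨d.e v, e_mem_leftIdeal v⟩ := Subtype.ext (e_idem v).symm
    rw [h1, map_smul, e_smul_ne hSj hv]
  ext x
  have hx : (x : ↥(leftIdeal (d.e v))) = (x : B) • ⟨d.e v, e_mem_leftIdeal v⟩ :=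
    Subtype.ext (mem_leftIdeal.mp x.2).symm
  rw [hx, map_smul, h0, smul_zero]
  rfl

/-- Evaluation at `e j` identifies `Hom(P(j), L(j))` with `L(j)`. -/
noncomputable def homEquivSimple (hSj : d.IsSimpleAt j Sj) :
    (↥(leftIdeal (d.e j)) →ₗ[B] Sj) ≃ₗ[K] Sj where
  toFun φ := φ ⟨d.e j, e_mem_leftIdeal j⟩
  map_add' φ ψ := rfl
  map_smul' c φ := rfl
  invFun s :=
    { toFun := fun y => (y : B) • s
      map_add' := fun y z => by
        show ((y : B) + (z : B)) • s = (y : B) • s + (z : B) • s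
        rw [add_smul]
      map_smul' := fun b y => by
        show ((b • y : ↥(leftIdeal (d.e j))) : B) • s = b • ((y : B) • s)
        rw [SetLike.val_smul, smul_eq_mul, mul_smul] }
  left_inv φ := by
    ext y
    show (y : B) • φ ⟨d.e j, e_mem_leftIdeal j⟩ = φ y
    rw [← map_smul]
    congr 1
    exact Subtype.ext (mem_leftIdeal.mp y.2)
  right_inv s := hSj.2 s

lemma finrank_hom_proj (hdir : d.Directed) (hSj : d.IsSimpleAt j Sj) (v : Fin n) :
    Module.finrank K (↥(leftIdeal (d.e v)) →ₗ[B] Sj) = if v = j then 1 else 0 := by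
  split
  · next hvj =>
      subst hvj
      rw [LinearEquiv.finrank_eq (homEquivSimple hSj)]
      exact simple_finrank_one hdir hSj
  · next hvj =>
      haveI : Subsingleton (↥(leftIdeal (d.e v)) →ₗ[B] Sj) :=
        ⟨fun φ ψ => by rw [hom_zero_of_ne hSj hvj φ, hom_zero_of_ne hSj hvj ψ]⟩
      exact Module.finrank_zero_of_subsingleton

lemma finrank_hom_subsingleton {Q : Type u} [AddCommGroup Q] [Module B Q]
    (hQ : Subsingleton Q) : Module.finrank K (Q →ₗ[B] Sj) = 0 := by
  haveI : Subsingleton (Q →ₗ[B] Sj) :=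
    ⟨fun φ ψ => LinearMap.ext fun x => by rw [Subsingleton.elim x 0, map_zero, map_zero]⟩
  exact Module.finrank_zero_of_subsingleton

/-- Precomposition with a `B`-linear iso is a `K`-linear iso of Hom spaces. -/
noncomputable def homCongrK {M M' : Type u} [AddCommGroup M] [Module B M]
    [AddCommGroup M'] [Module B M'] (e : M ≃ₗ[B] M') :
    (M →ₗ[B] Sj) ≃ₗ[K] (M' →ₗ[B] Sj) where
  toFun φ := φ ∘ₗ (e.symm : M' →ₗ[B] M)
  map_add' φ ψ := LinearMap.add_comp _ _ _
  map_smul' c φ := LinearMap.smul_comp _ _ _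
  invFun ψ := ψ ∘ₗ (e : M →ₗ[B] M')
  left_inv φ := by ext x; simp
  right_inv ψ := by ext x; simp

end Simple

end St17

namespace St17

open Submodule LinearMap

variable {K : Type u} [Field K] {n ℓ : ℕ} {B : Type u} [Ring B] [Algebra K B]
variable {d : IdemData K n B}

section Aug

variable {Si : Type u} [AddCommGroup Si] [Module B Si] {i : Fin n}

lemma algebraMap_smul_eq_zero {S : Type u} [AddCommGroup S] [Module B S] {c : K} (hc : c ≠ 0)
    {s : S} (h : algebraMap K B c • s = 0) : s = 0 := by
  have h2 : (algebraMap K B c⁻¹ * algebraMap K B c) • s = 0 := by rw [mul_smul, h, smul_zero]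
  rwa [← map_mul, inv_mul_cancel₀ hc, map_one, one_smul] at h2

lemma e_ne_zero (hb : IsBandAlgebra d ℓ) (hl : 3 ≤ ℓ) (w : Fin n) : d.e w ≠ 0 := by
  intro h0
  have hc : cornerSpace K (d.e w) (d.e w) = ⊥ := by
    rw [eq_bot_iff]
    intro x hx
    rw [mem_corner] at hx
    rw [Submodule.mem_bot, ← hx, h0, zero_mul, zero_mul]
  have := hb.2.1 w w le_rfl (by omega)
  rw [hc] at this
  simp at this

lemma e_mem_corner (w : Fin n) : d.e w ∈ cornerSpace K (d.e w) (d.e w) := by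
  rw [mem_corner, e_idem, e_idem]

/-- The map `P(w) → S`, `y ↦ y • s`. -/
noncomputable def smulMap (d : IdemData K n B) {S : Type u} [AddCommGroup S] [Module B S]
    (w : Fin n) (s : S) : ↥(leftIdeal (d.e w)) →ₗ[B] S where
  toFun y := (y : B) • s
  map_add' y z := by
    show ((y : B) + (z : B)) • s = (y : B) • s + (z : B) • s
    rw [add_smul]
  map_smul' b y := by
    show ((b • y : ↥(leftIdeal (d.e w))) : B) • s = b • ((y : B) • s)
    rw [SetLike.val_smul, smul_eq_mul, mul_smul]

lemma smulMap_surj (hSi : d.IsSimpleAt i Si) {s₀ : Si} (hs₀ : s₀ ≠ 0) :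
    Function.Surjective (smulMap d i s₀) := by
  haveI : IsSimpleModule B Si := hSi.1
  rw [← LinearMap.range_eq_top]
  rcases eq_bot_or_eq_top (LinearMap.range (smulMap d i s₀)) with h | h
  · exfalso
    have hmem : s₀ ∈ LinearMap.range (smulMap d i s₀) := by
      refine ⟨⟨d.e i, e_mem_leftIdeal i⟩, ?_⟩
      show d.e i • s₀ = s₀
      exact hSi.2 s₀
    rw [h, Submodule.mem_bot] at hmem
    exact hs₀ hmem
  · exact h

lemma smulMap_apply_eq (hSi : d.IsSimpleAt i Si) (s : Si) (x : ↥(leftIdeal (d.e i))) :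
    (x : B) • s = (d.e i * (x : B)) • s := by
  rw [smul_elem hSi ((x : B)) s]
  conv_rhs => rw [smul_elem hSi (d.e i * (x : B)) s]
  have h1 : d.e i * (d.e i * (x : B)) = d.e i * (x : B) := by
    rw [← mul_assoc, e_idem]
  rw [h1]

lemma smulMap_ker (hb : IsBandAlgebra d ℓ) (hl : 3 ≤ ℓ) (hSi : d.IsSimpleAt i Si) {s₀ : Si}
    (hs₀ : s₀ ≠ 0) : LinearMap.ker (smulMap d i s₀) = Jsub d i 1 := by
  ext x
  rw [LinearMap.mem_ker, mem_Jsub_iff hb]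
  have hpa : ∃ c₀ : K, c₀ ≠ 0 ∧ d.e i = c₀ • pa d i i := by
    obtain ⟨c₀, hc₀⟩ := exists_smul_pa hb (e_mem_corner (d := d) i)
    refine ⟨c₀, fun h0 => ?_, hc₀⟩
    rw [h0, zero_smul] at hc₀
    exact e_ne_zero hb hl i hc₀
  constructor
  · intro h0 j hj
    by_cases hji : j = i
    · subst hji
      obtain ⟨c, hc⟩ := comp_smul hb x.2 j
      by_cases hc0 : c = 0
      · rw [hc, hc0, zero_smul]
      · exfalso
        have h1 : (d.e j * (x : B)) • s₀ = 0 := by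
          rw [← smulMap_apply_eq hSi s₀ x]
          exact h0
        rw [hc, Algebra.smul_def, mul_smul] at h1
        have h2 : pa d j j • s₀ = 0 := algebraMap_smul_eq_zero hc0 h1
        obtain ⟨c₀, hc₀, hee⟩ := hpa
        have h3 : d.e j • s₀ = 0 := by
          rw [hee, Algebra.smul_def, mul_smul, h2, smul_zero]
        rw [hSi.2 s₀] at h3
        exact hs₀ h3
    · exact comp_zero hb x.2 (by
        intro hcon
        have : (i : ℕ) ≤ (j : ℕ) := hcon.1
        have : (j : ℕ) ≠ (i : ℕ) := fun h => hji (Fin.ext h)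
        omega)
  · intro h
    show (x : B) • s₀ = 0
    rw [smulMap_apply_eq hSi s₀ x, h i (by omega), zero_smul]

end Aug

/-- kernel of right multiplication `P(u) → P(w)`. -/
lemma rmul_ker (hb : IsBandAlgebra d ℓ) {u w : Fin n} (hwu : (w : ℕ) ≤ (u : ℕ))
    (hu : (u : ℕ) < (w : ℕ) + ℓ) :
    LinearMap.ker (rmul d u w) = Jsub d u ((w : ℕ) + ℓ - (u : ℕ)) := by
  ext x
  rw [LinearMap.mem_ker, rmul_zero_iff hb hwu hu, mem_Jsub_iff hb]
  have harith : (u : ℕ) + ((w : ℕ) + ℓ - (u : ℕ)) = (w : ℕ) + ℓ := by omega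
  rw [harith]

/-- The vertex sequence of the minimal projective resolution. -/
def vnat (i ℓ : ℕ) : ℕ → ℕ
  | 0 => i
  | (k + 1) => vnat i ℓ k + (if k % 2 = 0 then 1 else ℓ - 1)

lemma vnat_closed {i ℓ : ℕ} (hl : 1 ≤ ℓ) : ∀ k, vnat i ℓ k = i + k / 2 * ℓ + k % 2
  | 0 => by simp [vnat]
  | (k + 1) => by
      rw [vnat, vnat_closed hl k]
      by_cases hk : k % 2 = 0
      · have e1 : (k + 1) / 2 = k / 2 := by omega
        have e2 : (k + 1) % 2 = 1 := by omega
        rw [if_pos hk, e1, e2, hk]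
      · have hk1 : k % 2 = 1 := by omega
        have e1 : (k + 1) / 2 = k / 2 + 1 := by omega
        have e2 : (k + 1) % 2 = 0 := by omega
        rw [if_neg hk, e1, e2, hk1, add_mul, one_mul]
        omega

end St17

open St17

/-- Section 7.1 of the paper.
Let `ℓ ≥ 3` and `B = K𝔸ₙ/(rad K𝔸ₙ)^ℓ` (characterized by `IsBandAlgebra`; vertices are
`0, …, n-1` here instead of `1, …, n`).  Then the `k`-th term of the minimal projective
resolution of `L_B(i)` is `P_B(i + qℓ)` if `k = 2q` and `P_B(i + qℓ + 1)` if `k = 2q + 1`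
(as long as these vertices exist, and the resolution terminates — is zero — otherwise);
moreover for all vertices `j` and all `k ≥ 0`,
`dim_K Ext^{2q}_B(L_B(i), L_B(j)) = 1` if `j = i + qℓ` (and `j ≤ n`) and `= 0` otherwise,
and `dim_K Ext^{2q+1}_B(L_B(i), L_B(j)) = 1` if `j = i + qℓ + 1` and `= 0` otherwise;
here `Ext^k_B(L_B(i), L_B(j)) = Hom_B(P^k, L_B(j))` because the Hom-complex differentials
vanish (first part of conclusion (2)). -/
theorem statement17
    (K : Type) [Field K] [IsAlgClosed K] (n ℓ : ℕ) (hℓ : 3 ≤ ℓ)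
    (B : Type) [Ring B] [Algebra K B]
    (dB : IdemData K n B) (hband : IsBandAlgebra dB ℓ)
    (i : Fin n)
    (Si : Type) [AddCommGroup Si] [Module B Si] (hSi : dB.IsSimpleAt i Si)
    -- a minimal projective resolution of the simple module `L_B(i)`
    (R : ProjRes K B Si) (hmin : R.Minimal dB) :
    -- (1) shape of the resolution: `P^{2q} = P_B(i + qℓ)` and `P^{2q+1} = P_B(i + qℓ + 1)`
    -- as long as these vertices exist, and the resolution vanishes beyond.
    (∀ q : ℕ, ∀ h : (i : ℕ) + q * ℓ < n,
      Nonempty (R.P (2 * q) ≃ₗ[B] ↥(leftIdeal (dB.e ⟨(i : ℕ) + q * ℓ, h⟩)))) ∧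
    (∀ q : ℕ, ¬((i : ℕ) + q * ℓ < n) → Subsingleton (R.P (2 * q))) ∧
    (∀ q : ℕ, ∀ h : (i : ℕ) + q * ℓ + 1 < n,
      Nonempty (R.P (2 * q + 1) ≃ₗ[B] ↥(leftIdeal (dB.e ⟨(i : ℕ) + q * ℓ + 1, h⟩)))) ∧
    (∀ q : ℕ, ¬((i : ℕ) + q * ℓ + 1 < n) → Subsingleton (R.P (2 * q + 1))) ∧
    -- (2) `Ext^k_B(L_B(i), L_B(j))` is computed by `Hom_B(P^k, L_B(j))`, since the
    -- differentials of the `Hom` complex vanish (the resolution being minimal), and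
    -- `dim Ext^{2q} = 1` iff `j = i + qℓ`, `dim Ext^{2q+1} = 1` iff `j = i + qℓ + 1`,
    -- and these dimensions are `0` otherwise.
    (∀ (j : Fin n) (Sj : Type) (_ : AddCommGroup Sj) (_ : Module B Sj) (_ : Module K Sj)
      (_ : IsScalarTower K B Sj) (_ : SMulCommClass B K Sj), dB.IsSimpleAt j Sj →
      (∀ (k : ℕ) (φ : R.P k →ₗ[B] Sj), φ.comp (R.d k) = 0) ∧
      (∀ q : ℕ, Module.finrank K (R.P (2 * q) →ₗ[B] Sj) =
        if (j : ℕ) = (i : ℕ) + q * ℓ then 1 else 0) ∧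
      (∀ q : ℕ, Module.finrank K (R.P (2 * q + 1) →ₗ[B] Sj) =
        if (j : ℕ) = (i : ℕ) + q * ℓ + 1 then 1 else 0)) := by
  classical
  have hdir : dB.Directed := hband.1
  -- the chain of kernels of the resolution
  let Ker : ∀ k : ℕ, Submodule B (R.P k) := fun k =>
    match k with
    | 0 => LinearMap.ker R.aug
    | (k' + 1) => LinearMap.ker (R.d k')
  have hKer_rad : ∀ k, Ker k ≤ pw dB ⊤ 1 := by
    intro k
    cases k with
    | zero =>
        show LinearMap.ker R.aug ≤ _
        rw [R.exact0]
        exact le_pw_one_of_isRadSpan hdir (hmin 0)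
    | succ k' =>
        show LinearMap.ker (R.d k') ≤ _
        rw [R.exact k']
        exact le_pw_one_of_isRadSpan hdir (hmin (k' + 1))
  have hKer_range : ∀ k, LinearMap.range (R.d k) = Ker k := by
    intro k
    cases k with
    | zero => exact R.exact0.symm
    | succ k' => exact (R.exact k').symm
  -- vertex and shift sequences
  let tn : ℕ → ℕ := fun k => if k % 2 = 0 then 1 else ℓ - 1
  have htn1 : ∀ k, 1 ≤ tn k := by
    intro k
    show 1 ≤ if k % 2 = 0 then 1 else ℓ - 1
    split <;> omega
  have htnl : ∀ k, tn k < ℓ := by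
    intro k
    show (if k % 2 = 0 then 1 else ℓ - 1) < ℓ
    split <;> omega
  have hvs : ∀ k, vnat (i : ℕ) ℓ (k + 1) = vnat (i : ℕ) ℓ k + tn k := fun _ => rfl
  have hlt : ∀ k, ℓ - tn k = tn (k + 1) := by
    intro k
    show ℓ - (if k % 2 = 0 then 1 else ℓ - 1) = if (k + 1) % 2 = 0 then 1 else ℓ - 1
    by_cases h : k % 2 = 0
    · rw [if_pos h, if_neg (by omega)]
    · rw [if_neg h, if_pos (by omega)]
      omega
  have hv0 : vnat (i : ℕ) ℓ 0 = (i : ℕ) := rfl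
  -- the main induction
  have main : ∀ k : ℕ, (∀ h : vnat (i : ℕ) ℓ k < n,
      ∃ g : R.P k ≃ₗ[B] ↥(leftIdeal (dB.e ⟨vnat (i : ℕ) ℓ k, h⟩)),
        Submodule.map (g : R.P k →ₗ[B] ↥(leftIdeal (dB.e ⟨vnat (i : ℕ) ℓ k, h⟩))) (Ker k)
          = Jsub dB ⟨vnat (i : ℕ) ℓ k, h⟩ (tn k)) ∧
      (n ≤ vnat (i : ℕ) ℓ k → Subsingleton (R.P k)) := by
    intro k
    induction k with
    | zero =>
        constructor
        · intro h
          have hfin : (⟨vnat (i : ℕ) ℓ 0, h⟩ : Fin n) = i := Fin.ext rfl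
          rw [hfin]
          haveI : IsSimpleModule B Si := hSi.1
          haveI : Nontrivial Si := IsSimpleModule.nontrivial B Si
          obtain ⟨s₀, hs₀⟩ := exists_ne (0 : Si)
          obtain ⟨g, hg⟩ := cover hband hℓ (R.proj 0) i (s := 1) le_rfl R.aug R.aug_surj
            (hKer_rad 0) (smulMap dB i s₀) (smulMap_surj hSi hs₀)
            (smulMap_ker hband hℓ hSi hs₀)
          exact ⟨g, hg⟩
        · intro h
          exact absurd i.isLt (by omega)
    | succ k ih =>
        by_cases hk1 : vnat (i : ℕ) ℓ (k + 1) < n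
        · have hk : vnat (i : ℕ) ℓ k < n := by
            have h1 := hvs k
            have h2 := htn1 k
            omega
          obtain ⟨g, hgker⟩ := ih.1 hk
          have hwu : ((⟨vnat (i : ℕ) ℓ k, hk⟩ : Fin n) : ℕ) ≤
              ((⟨vnat (i : ℕ) ℓ (k + 1), hk1⟩ : Fin n) : ℕ) := by
            show vnat (i : ℕ) ℓ k ≤ vnat (i : ℕ) ℓ (k + 1)
            rw [hvs k]
            omega
          have huw : ((⟨vnat (i : ℕ) ℓ (k + 1), hk1⟩ : Fin n) : ℕ) <
              ((⟨vnat (i : ℕ) ℓ k, hk⟩ : Fin n) : ℕ) + ℓ := by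
            show vnat (i : ℕ) ℓ (k + 1) < vnat (i : ℕ) ℓ k + ℓ
            rw [hvs k]
            have := htnl k
            omega
          have hπ₀range : LinearMap.range
              ((g : R.P k →ₗ[B] ↥(leftIdeal (dB.e ⟨vnat (i : ℕ) ℓ k, hk⟩))) ∘ₗ R.d k) = Jsub dB ⟨vnat (i : ℕ) ℓ k, hk⟩ (tn k) := by
            rw [LinearMap.range_comp, hKer_range k, hgker]
          have hmemπ : ∀ x, ((g : R.P k →ₗ[B] ↥(leftIdeal (dB.e ⟨vnat (i : ℕ) ℓ k, hk⟩))) ∘ₗ R.d k) x ∈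
              Jsub dB ⟨vnat (i : ℕ) ℓ k, hk⟩ (tn k) := fun x => by rw [← hπ₀range]; exact ⟨x, rfl⟩
          have hπs : Function.Surjective
              (LinearMap.codRestrict (Jsub dB ⟨vnat (i : ℕ) ℓ k, hk⟩ (tn k)) _ hmemπ) := by
            rintro ⟨y, hy⟩
            rw [← hπ₀range] at hy
            obtain ⟨x, hx⟩ := hy
            exact ⟨x, Subtype.ext hx⟩
          have hπker : LinearMap.ker (LinearMap.codRestrict (Jsub dB ⟨vnat (i : ℕ) ℓ k, hk⟩ (tn k)) _ hmemπ)
              = Ker (k + 1) := by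
            rw [LinearMap.ker_codRestrict]
            show LinearMap.ker ((g : R.P k →ₗ[B] ↥(leftIdeal (dB.e ⟨vnat (i : ℕ) ℓ k, hk⟩))) ∘ₗ R.d k)
              = LinearMap.ker (R.d k)
            ext x
            simp only [LinearMap.mem_ker, LinearMap.coe_comp, Function.comp_apply]
            constructor
            · intro hx
              have : g (R.d k x) = 0 := hx
              exact (LinearEquiv.map_eq_zero_iff g).mp this
            · intro hx
              show g (R.d k x) = 0
              rw [hx, map_zero]
          have hρ₀range : LinearMap.range (rmul dB ⟨vnat (i : ℕ) ℓ (k + 1), hk1⟩ ⟨vnat (i : ℕ) ℓ k, hk⟩) = Jsub dB ⟨vnat (i : ℕ) ℓ k, hk⟩ (tn k) := by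
            rw [rmul_range hband hwu huw]
            congr 1
            show vnat (i : ℕ) ℓ (k + 1) - vnat (i : ℕ) ℓ k = tn k
            rw [hvs k]
            omega
          have hmemρ : ∀ x, rmul dB ⟨vnat (i : ℕ) ℓ (k + 1), hk1⟩ ⟨vnat (i : ℕ) ℓ k, hk⟩ x ∈ Jsub dB ⟨vnat (i : ℕ) ℓ k, hk⟩ (tn k) := fun x => by
            rw [← hρ₀range]; exact ⟨x, rfl⟩
          have hρs : Function.Surjective
              (LinearMap.codRestrict (Jsub dB ⟨vnat (i : ℕ) ℓ k, hk⟩ (tn k)) _ hmemρ) := by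
            rintro ⟨y, hy⟩
            rw [← hρ₀range] at hy
            obtain ⟨x, hx⟩ := hy
            exact ⟨x, Subtype.ext hx⟩
          have hρker : LinearMap.ker (LinearMap.codRestrict (Jsub dB ⟨vnat (i : ℕ) ℓ k, hk⟩ (tn k)) _ hmemρ)
              = Jsub dB ⟨vnat (i : ℕ) ℓ (k + 1), hk1⟩ (tn (k + 1)) := by
            rw [LinearMap.ker_codRestrict, rmul_ker hband hwu huw]
            congr 1
            show vnat (i : ℕ) ℓ k + ℓ - vnat (i : ℕ) ℓ (k + 1) = tn (k + 1)
            have h1 := hvs k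
            have h2 := hlt k
            have h3 := htnl k
            omega
          obtain ⟨g', hg'⟩ := cover hband hℓ (R.proj (k + 1)) ⟨vnat (i : ℕ) ℓ (k + 1), hk1⟩ (htn1 (k + 1))
            (LinearMap.codRestrict (Jsub dB ⟨vnat (i : ℕ) ℓ k, hk⟩ (tn k)) _ hmemπ) hπs
            (by rw [hπker]; exact hKer_rad (k + 1))
            (LinearMap.codRestrict (Jsub dB ⟨vnat (i : ℕ) ℓ k, hk⟩ (tn k)) _ hmemρ) hρs hρker
          constructor
          · intro h
            refine ⟨g', ?_⟩
            rw [← hπker]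
            exact hg'
          · intro h
            exact absurd hk1 (by omega)
        · refine ⟨fun h => absurd h hk1, fun _ => ?_⟩
          have hKtop : Ker (k + 1) = ⊤ := by
            show LinearMap.ker (R.d k) = ⊤
            by_cases hk : vnat (i : ℕ) ℓ k < n
            · obtain ⟨g, hgker⟩ := ih.1 hk
              have hJbot : Jsub dB ⟨vnat (i : ℕ) ℓ k, hk⟩ (tn k) = ⊥ := by
                apply Jsub_eq_bot
                show n ≤ vnat (i : ℕ) ℓ k + tn k
                rw [← hvs k]
                omega
              have hKbot : Ker k = ⊥ := by
                rw [eq_bot_iff]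
                intro x hx
                have hgx : (g : R.P k →ₗ[B] _) x ∈
                    Submodule.map (g : R.P k →ₗ[B]
                      ↥(leftIdeal (dB.e ⟨vnat (i : ℕ) ℓ k, hk⟩))) (Ker k) :=
                  Submodule.mem_map_of_mem (f := (g : R.P k →ₗ[B]
                    ↥(leftIdeal (dB.e ⟨vnat (i : ℕ) ℓ k, hk⟩)))) hx
                rw [hgker, hJbot, Submodule.mem_bot] at hgx
                have hx0 : x = 0 := by
                  have : g x = 0 := hgx
                  exact (LinearEquiv.map_eq_zero_iff g).mp this
                rw [hx0]
                exact Submodule.zero_mem _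
              have hd0 : R.d k = 0 := LinearMap.range_eq_bot.mp (by rw [hKer_range k, hKbot])
              rw [hd0]
              exact LinearMap.ker_zero
            · haveI hss := ih.2 (by omega)
              have hd0 : R.d k = 0 := by
                apply LinearMap.ext
                intro x
                exact Subsingleton.elim _ _
              rw [hd0]
              exact LinearMap.ker_zero
          exact subsingleton_of_top_le_pw hband hℓ
            (le_trans (le_of_eq hKtop.symm) (hKer_rad (k + 1)))
  -- arithmetic of the vertex sequence
  have hveven : ∀ q : ℕ, vnat (i : ℕ) ℓ (2 * q) = (i : ℕ) + q * ℓ := by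
    intro q
    rw [vnat_closed (by omega)]
    have e1 : 2 * q / 2 = q := by omega
    have e2 : 2 * q % 2 = 0 := by omega
    rw [e1, e2]
    omega
  have hvodd : ∀ q : ℕ, vnat (i : ℕ) ℓ (2 * q + 1) = (i : ℕ) + q * ℓ + 1 := by
    intro q
    rw [vnat_closed (by omega)]
    have e1 : (2 * q + 1) / 2 = q := by omega
    have e2 : (2 * q + 1) % 2 = 1 := by omega
    rw [e1, e2]
  refine ⟨?_, ?_, ?_, ?_, ?_⟩
  · intro q h
    obtain ⟨g, -⟩ := (main (2 * q)).1 (by rw [hveven q]; exact h)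
    have hfin : (⟨vnat (i : ℕ) ℓ (2 * q), by rw [hveven q]; exact h⟩ : Fin n)
        = ⟨(i : ℕ) + q * ℓ, h⟩ := Fin.ext (hveven q)
    exact ⟨hfin ▸ g⟩
  · intro q hq
    exact (main (2 * q)).2 (by rw [hveven q]; omega)
  · intro q h
    obtain ⟨g, -⟩ := (main (2 * q + 1)).1 (by rw [hvodd q]; exact h)
    have hfin : (⟨vnat (i : ℕ) ℓ (2 * q + 1), by rw [hvodd q]; exact h⟩ : Fin n)
        = ⟨(i : ℕ) + q * ℓ + 1, h⟩ := Fin.ext (hvodd q)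
    exact ⟨hfin ▸ g⟩
  · intro q hq
    exact (main (2 * q + 1)).2 (by rw [hvodd q]; omega)
  · intro j Sj _ _ _ _ _ hSj
    refine ⟨?_, ?_, ?_⟩
    · intro k φ
      apply LinearMap.ext
      intro x
      simp only [LinearMap.comp_apply, LinearMap.zero_apply]
      have hz : ∀ y ∈ Submodule.span B {y : R.P k | ∃ b m, dB.IsRad b ∧ y = b • m},
          φ y = 0 := by
        intro y hy
        induction hy using Submodule.span_induction with
        | mem y hyy =>
            obtain ⟨b, m, hb, rfl⟩ := hyy
            rw [map_smul]
            exact rad_smul_simple hSj hb _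
        | zero => exact map_zero φ
        | add y z _ _ ihy ihz => rw [map_add, ihy, ihz, add_zero]
        | smul b y _ ih => rw [map_smul, ih, smul_zero]
      exact hz _ (hmin k ⟨x, rfl⟩)
    · intro q
      by_cases hq : (i : ℕ) + q * ℓ < n
      · obtain ⟨g, -⟩ := (main (2 * q)).1 (by rw [hveven q]; exact hq)
        rw [LinearEquiv.finrank_eq (homCongrK (Sj := Sj) g), finrank_hom_proj hdir hSj]
        by_cases hj : (j : ℕ) = (i : ℕ) + q * ℓ
        · rw [if_pos hj,
            if_pos (Fin.ext (show vnat (i : ℕ) ℓ (2 * q) = (j : ℕ) by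
              have := hveven q; omega))]
        · rw [if_neg hj, if_neg (fun hc => hj (by
            have hcv : vnat (i : ℕ) ℓ (2 * q) = (j : ℕ) := congrArg Fin.val hc
            have := hveven q
            omega))]
      · rw [finrank_hom_subsingleton ((main (2 * q)).2 (by rw [hveven q]; omega)),
          if_neg (fun hj => by have := j.isLt; omega)]
    · intro q
      by_cases hq : (i : ℕ) + q * ℓ + 1 < n
      · obtain ⟨g, -⟩ := (main (2 * q + 1)).1 (by rw [hvodd q]; exact hq)
        rw [LinearEquiv.finrank_eq (homCongrK (Sj := Sj) g), finrank_hom_proj hdir hSj]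
        by_cases hj : (j : ℕ) = (i : ℕ) + q * ℓ + 1
        · rw [if_pos hj,
            if_pos (Fin.ext (show vnat (i : ℕ) ℓ (2 * q + 1) = (j : ℕ) by
              have := hvodd q; omega))]
        · rw [if_neg hj, if_neg (fun hc => hj (by
            have hcv : vnat (i : ℕ) ℓ (2 * q + 1) = (j : ℕ) := congrArg Fin.val hc
            have := hvodd q
            omega))]
      · rw [finrank_hom_subsingleton ((main (2 * q + 1)).2 (by rw [hvodd q]; omega)),
          if_neg (fun hj => by have := j.isLt; omega)]
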